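/- Explicit second unipotent factor of the Bruhat decomposition: let Y ∈ GL_r(F) with det(Y_i) ≠ 0 for all 1 ≤ i ≤ r, and write (uniquely) θ_r(Y) = u_1 J_r t_1 u_2 with u_1, u_2 upper-triangular unipotent and t_1 invertible diagonal. For 1 ≤ i < j ≤ r let Y'_{i,j} denote the (r−i)×(r−i) submatrix of Y on the rows i+1,…,r and the columns {1, 2, …, r−i+1} \ {r−j+1}. Then (u_2)_{i,j} = det(Y'_{i,j})/det(Y_{r−i}) for all 1 ≤ i < j ≤ r. -/

import Mathlib

open Matrix

namespace RS

variable (F : Type*) [Field F]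

/-- The matrix `J_k`: its `(i, k+1-i)` entry (1-indexed) is `(-1)^(i-1)`, i.e. in 0-indexed
terms the `(i,j)` entry is `(-1)^i` when `i + j = k - 1`, and all other entries are `0`. -/
def Jmat (k : ℕ) : Matrix (Fin k) (Fin k) F :=
  Matrix.of fun i j => if (i : ℕ) + (j : ℕ) = k - 1 then (-1 : F) ^ (i : ℕ) else 0

/-- A 2×2 block matrix with blocks of sizes `a, b` (rows) and `c, d` (columns), realized on
`Fin (a+b) × Fin (c+d)`. -/
def blk2 {a b c d : ℕ} (A : Matrix (Fin a) (Fin c) F) (B : Matrix (Fin a) (Fin d) F)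
    (C : Matrix (Fin b) (Fin c) F) (D : Matrix (Fin b) (Fin d) F) :
    Matrix (Fin (a + b)) (Fin (c + d)) F :=
  Matrix.of fun i j =>
    if hi : (i : ℕ) < a then
      if hj : (j : ℕ) < c then A ⟨(i : ℕ), hi⟩ ⟨(j : ℕ), hj⟩
      else B ⟨(i : ℕ), hi⟩ ⟨(j : ℕ) - c, by have := j.isLt; omega⟩
    else
      if hj : (j : ℕ) < c then C ⟨(i : ℕ) - a, by have := i.isLt; omega⟩ ⟨(j : ℕ), hj⟩
      else D ⟨(i : ℕ) - a, by have := i.isLt; omega⟩ ⟨(j : ℕ) - c, by have := j.isLt; omega⟩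

/-- A 3×3 block (square) matrix with blocks of sizes `a, b, c`, realized on `Fin (a+b+c)`. -/
def blk3 {a b c : ℕ}
    (A11 : Matrix (Fin a) (Fin a) F) (A12 : Matrix (Fin a) (Fin b) F)
    (A13 : Matrix (Fin a) (Fin c) F)
    (A21 : Matrix (Fin b) (Fin a) F) (A22 : Matrix (Fin b) (Fin b) F)
    (A23 : Matrix (Fin b) (Fin c) F)
    (A31 : Matrix (Fin c) (Fin a) F) (A32 : Matrix (Fin c) (Fin b) F)
    (A33 : Matrix (Fin c) (Fin c) F) :
    Matrix (Fin (a + b + c)) (Fin (a + b + c)) F :=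
  Matrix.of fun i j =>
    if hi1 : (i : ℕ) < a then
      if hj1 : (j : ℕ) < a then A11 ⟨(i : ℕ), hi1⟩ ⟨(j : ℕ), hj1⟩
      else if hj2 : (j : ℕ) < a + b then A12 ⟨(i : ℕ), hi1⟩ ⟨(j : ℕ) - a, by omega⟩
      else A13 ⟨(i : ℕ), hi1⟩ ⟨(j : ℕ) - (a + b), by have := j.isLt; omega⟩
    else if hi2 : (i : ℕ) < a + b then
      if hj1 : (j : ℕ) < a then A21 ⟨(i : ℕ) - a, by omega⟩ ⟨(j : ℕ), hj1⟩
      else if hj2 : (j : ℕ) < a + b then A22 ⟨(i : ℕ) - a, by omega⟩ ⟨(j : ℕ) - a, by omega⟩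
      else A23 ⟨(i : ℕ) - a, by omega⟩ ⟨(j : ℕ) - (a + b), by have := j.isLt; omega⟩
    else
      if hj1 : (j : ℕ) < a then A31 ⟨(i : ℕ) - (a + b), by have := i.isLt; omega⟩ ⟨(j : ℕ), hj1⟩
      else if hj2 : (j : ℕ) < a + b then
        A32 ⟨(i : ℕ) - (a + b), by have := i.isLt; omega⟩ ⟨(j : ℕ) - a, by omega⟩
      else A33 ⟨(i : ℕ) - (a + b), by have := i.isLt; omega⟩
        ⟨(j : ℕ) - (a + b), by have := j.isLt; omega⟩

/-- `J'_{2k}`, the `2k×2k` block matrix `[[0, J_k], [-J_kᵀ, 0]]`. -/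
def Jp (k : ℕ) : Matrix (Fin (k + k)) (Fin (k + k)) F :=
  blk2 F 0 (Jmat F k) (-(Jmat F k)ᵀ) 0

/-- `Sp_{2N}(F) = {h ∈ GL_{2N}(F) : hᵀ J'_{2N} h = J'_{2N}}`. -/
def Sp (N : ℕ) : Set (Matrix (Fin (N + N)) (Fin (N + N)) F) :=
  {h | IsUnit h ∧ hᵀ * Jp F N * h = Jp F N}

/-- `θ_r(g) = J_r (g⁻¹)ᵀ J_r⁻¹`. -/
noncomputable def theta (r : ℕ) (g : Matrix (Fin r) (Fin r) F) : Matrix (Fin r) (Fin r) F :=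
  Jmat F r * (g⁻¹)ᵀ * (Jmat F r)⁻¹

/-- `θ_{r,m}(X) = (-1)^r J'_{2m} Xᵀ J_r`. -/
def thetaRM (r m : ℕ) (X : Matrix (Fin r) (Fin (m + m)) F) : Matrix (Fin (m + m)) (Fin r) F :=
  (-1 : F) ^ r • (Jp F m * Xᵀ * Jmat F r)

/-- `n(X,Y) = [[I_r, X, Y], [0, I_{2m}, θ_{r,m}(X)], [0, 0, I_r]]` (block sizes `r, 2m, r`). -/
def nMat (r m : ℕ) (X : Matrix (Fin r) (Fin (m + m)) F) (Y : Matrix (Fin r) (Fin r) F) :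
    Matrix (Fin (r + (m + m) + r)) (Fin (r + (m + m) + r)) F :=
  blk3 F 1 X Y 0 1 (thetaRM F r m X) 0 0 1

/-- `n̄(X,Y) = [[I_r, 0, 0], [(-1)^r J'_{2m} Xᵀ J_r, I_{2m}, 0], [(-1)^r Y, (-1)^r X, I_r]]`. -/
def nbarMat (r m : ℕ) (X : Matrix (Fin r) (Fin (m + m)) F) (Y : Matrix (Fin r) (Fin r) F) :
    Matrix (Fin (r + (m + m) + r)) (Fin (r + (m + m) + r)) F :=
  blk3 F 1 0 0 ((-1 : F) ^ r • (Jp F m * Xᵀ * Jmat F r)) 1 0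
    ((-1 : F) ^ r • Y) ((-1 : F) ^ r • X) 1

/-- `ẇ_0 = [[0, 0, I_r], [0, I_{2m}, 0], [(-1)^r I_r, 0, 0]]`. -/
def w0 (r m : ℕ) : Matrix (Fin (r + (m + m) + r)) (Fin (r + (m + m) + r)) F :=
  blk3 F 0 0 1 0 1 0 ((-1 : F) ^ r • (1 : Matrix (Fin r) (Fin r) F)) 0 0

/-- `S(X,Y) = I_{2m} - J'_{2m} Xᵀ (Y⁻¹)ᵀ J_r X`. -/
noncomputable def Smat (r m : ℕ) (X : Matrix (Fin r) (Fin (m + m)) F) (Y : Matrix (Fin r) (Fin r) F) :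
    Matrix (Fin (m + m)) (Fin (m + m)) F :=
  1 - Jp F m * Xᵀ * (Y⁻¹)ᵀ * Jmat F r * X

/-- The block diagonal matrix `diag(m₁, m₂, θ_r(m₁))`. -/
noncomputable def levi (r m : ℕ) (m1 : Matrix (Fin r) (Fin r) F)
    (m2 : Matrix (Fin (m + m)) (Fin (m + m)) F) :
    Matrix (Fin (r + (m + m) + r)) (Fin (r + (m + m) + r)) F :=
  blk3 F m1 0 0 0 m2 0 0 0 (theta F r m1)

/-- `m(X,Y) = diag(θ_r(Y), S(X,Y)⁻¹, Y)`. -/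
noncomputable def mMat (r m : ℕ) (X : Matrix (Fin r) (Fin (m + m)) F) (Y : Matrix (Fin r) (Fin r) F) :
    Matrix (Fin (r + (m + m) + r)) (Fin (r + (m + m) + r)) F :=
  blk3 F (theta F r Y) 0 0 0 (Smat F r m X Y)⁻¹ 0 0 0 Y

/-- `α^∨(t) = diag(t·I_r, I_{2m}, t⁻¹·I_r)`. -/
def coroot (r m : ℕ) (t : Fˣ) :
    Matrix (Fin (r + (m + m) + r)) (Fin (r + (m + m) + r)) F :=
  blk3 F ((t : F) • (1 : Matrix (Fin r) (Fin r) F)) 0 0 0 1 0 0 0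
    (((t⁻¹ : Fˣ) : F) • (1 : Matrix (Fin r) (Fin r) F))

/-- Transport of a `2n×2n` matrix written with block sizes `(r, 2m, r)` to the canonical
index type `Fin ((r+m)+(r+m))` (where `n = r + m`), along the obvious cast. -/
def toSp (r m : ℕ) (M : Matrix (Fin (r + (m + m) + r)) (Fin (r + (m + m) + r)) F) :
    Matrix (Fin ((r + m) + (r + m))) (Fin ((r + m) + (r + m))) F :=
  Matrix.reindex (finCongr (by omega)) (finCongr (by omega)) M

/-- Upper-triangular unipotent matrices. -/
def UTU {k : ℕ} (u : Matrix (Fin k) (Fin k) F) : Prop :=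
  (∀ i, u i i = 1) ∧ ∀ i j : Fin k, (j : ℕ) < (i : ℕ) → u i j = 0

/-- A row vector as a `1 × k` matrix. -/
def rowVec {k : ℕ} (v : Fin k → F) : Matrix (Fin 1) (Fin k) F := Matrix.of fun _ j => v j

/-- A column vector as a `k × 1` matrix. -/
def colVec {k : ℕ} (v : Fin k → F) : Matrix (Fin k) (Fin 1) F := Matrix.of fun i _ => v i

/-- A scalar as a `1 × 1` matrix. -/
def scMat (x : F) : Matrix (Fin 1) (Fin 1) F := Matrix.of fun _ _ => x

/-- `Y_i`: the lower-left `i×i` corner submatrix of `Y` (rows `r-i+1,…,r`, columns `1,…,i`,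
1-indexed). -/
def llCorner (r : ℕ) (Y : Matrix (Fin r) (Fin r) F) (i : ℕ) (h : i ≤ r) :
    Matrix (Fin i) (Fin i) F :=
  Matrix.of fun a b =>
    Y ⟨r - i + (a : ℕ), by have := a.isLt; omega⟩ ⟨(b : ℕ), by have := b.isLt; omega⟩

/-- `Y^{(r-1)}`: the upper-right `(r-1)×(r-1)` corner submatrix of `Y` (rows `1,…,r-1`,
columns `2,…,r`, 1-indexed). -/
def urCorner (r : ℕ) (Y : Matrix (Fin r) (Fin r) F) :
    Matrix (Fin (r - 1)) (Fin (r - 1)) F :=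
  Matrix.of fun a b =>
    Y ⟨(a : ℕ), by have := a.isLt; omega⟩ ⟨(b : ℕ) + 1, by have := b.isLt; omega⟩

/-- `J₀`: the central `(2m-2)×(2m-2)` submatrix of `J'_{2m}` (rows and columns `2,…,2m-1`). -/
def J0 (m : ℕ) : Matrix (Fin (m + m - 2)) (Fin (m + m - 2)) F :=
  Matrix.of fun i j =>
    Jp F m ⟨(i : ℕ) + 1, by have := i.isLt; omega⟩ ⟨(j : ℕ) + 1, by have := j.isLt; omega⟩

/-- `diag(t₁,…,t_n, t_n⁻¹,…,t₁⁻¹)` (with `n = r + m`), realized on the index type with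
block sizes `(r, 2m, r)`. -/
def torus (r m : ℕ) (t : Fin (r + m) → Fˣ) :
    Matrix (Fin (r + (m + m) + r)) (Fin (r + (m + m) + r)) F :=
  Matrix.diagonal fun i =>
    if h : (i : ℕ) < r + m then ((t ⟨(i : ℕ), h⟩ : Fˣ) : F)
    else (((t ⟨r + (m + m) + r - 1 - (i : ℕ), by have := i.isLt; omega⟩)⁻¹ : Fˣ) : F)

/-- `Y_{i,j}`: the `(j-1)×(j-1)` submatrix of `Y` on the rows `{r-j+1,…,r} \ {r-i+1}` and the
columns `1,…,j-1` (all 1-indexed). -/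
def subDelRow (r : ℕ) (Y : Matrix (Fin r) (Fin r) F) (i j : ℕ)
    (hi : 1 ≤ i) (hij : i < j) (hj : j ≤ r) : Matrix (Fin (j - 1)) (Fin (j - 1)) F :=
  Matrix.of fun a b =>
    Y (if h : r - j + (a : ℕ) < r - i then
          (⟨r - j + (a : ℕ), by have := a.isLt; omega⟩ : Fin r)
        else (⟨r - j + (a : ℕ) + 1, by have := a.isLt; omega⟩ : Fin r))
      ⟨(b : ℕ), by have := b.isLt; omega⟩

/-- `Y'_{i,j}`: the `(r-i)×(r-i)` submatrix of `Y` on the rows `i+1,…,r` and the columns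
`{1,…,r-i+1} \ {r-j+1}` (all 1-indexed). -/
def subDelCol (r : ℕ) (Y : Matrix (Fin r) (Fin r) F) (i j : ℕ)
    (hi : 1 ≤ i) (hij : i < j) (hj : j ≤ r) : Matrix (Fin (r - i)) (Fin (r - i)) F :=
  Matrix.of fun a b =>
    Y ⟨i + (a : ℕ), by have := a.isLt; omega⟩
      (if h : (b : ℕ) < r - j then (⟨(b : ℕ), by have := b.isLt; omega⟩ : Fin r)
        else (⟨(b : ℕ) + 1, by have := b.isLt; omega⟩ : Fin r))



/-! ### Auxiliary lemmas for Statement 15 -/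

lemma RS_J_mul_apply (r : ℕ) (M : Matrix (Fin r) (Fin r) F) (a b : Fin r) :
    (Jmat F r * M) a b
      = (-1 : F) ^ (a : ℕ) * M ⟨r - 1 - (a : ℕ), by have := a.isLt; omega⟩ b := by
  rw [Matrix.mul_apply]
  rw [Finset.sum_eq_single (⟨r - 1 - (a : ℕ), by have := a.isLt; omega⟩ : Fin r)]
  · simp only [Jmat, Matrix.of_apply]
    rw [if_pos (by have := a.isLt; omega)]
  · intro k _ hk
    simp only [Jmat, Matrix.of_apply]
    rw [if_neg, zero_mul]
    intro hc
    apply hk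
    apply Fin.ext
    have := a.isLt; have := k.isLt
    simp only []
    omega
  · intro h; exact absurd (Finset.mem_univ _) h

lemma RS_mul_J_apply (r : ℕ) (M : Matrix (Fin r) (Fin r) F) (a b : Fin r) :
    (M * Jmat F r) a b
      = (-1 : F) ^ (r - 1 - (b : ℕ)) * M a ⟨r - 1 - (b : ℕ), by have := b.isLt; omega⟩ := by
  rw [Matrix.mul_apply]
  rw [Finset.sum_eq_single (⟨r - 1 - (b : ℕ), by have := b.isLt; omega⟩ : Fin r)]
  · simp only [Jmat, Matrix.of_apply]
    rw [if_pos (by have := b.isLt; omega), mul_comm]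
  · intro k _ hk
    simp only [Jmat, Matrix.of_apply]
    rw [if_neg, mul_zero]
    intro hc
    apply hk
    apply Fin.ext
    have := b.isLt; have := k.isLt
    simp only []
    omega
  · intro h; exact absurd (Finset.mem_univ _) h

lemma RS_Jt_mul_apply (r : ℕ) (M : Matrix (Fin r) (Fin r) F) (a b : Fin r) :
    ((Jmat F r)ᵀ * M) a b
      = (-1 : F) ^ (r - 1 - (a : ℕ)) * M ⟨r - 1 - (a : ℕ), by have := a.isLt; omega⟩ b := by
  rw [Matrix.mul_apply]
  rw [Finset.sum_eq_single (⟨r - 1 - (a : ℕ), by have := a.isLt; omega⟩ : Fin r)]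
  · simp only [Jmat, Matrix.transpose_apply, Matrix.of_apply]
    rw [if_pos (by have := a.isLt; omega)]
  · intro k _ hk
    simp only [Jmat, Matrix.transpose_apply, Matrix.of_apply]
    rw [if_neg, zero_mul]
    intro hc
    apply hk
    apply Fin.ext
    have := a.isLt; have := k.isLt
    simp only []
    omega
  · intro h; exact absurd (Finset.mem_univ _) h

lemma RS_J_mul_Jt (r : ℕ) : Jmat F r * (Jmat F r)ᵀ = 1 := by
  ext a b
  rw [RS_J_mul_apply]
  simp only [Matrix.transpose_apply, Jmat, Matrix.of_apply, Matrix.one_apply]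
  by_cases hab : a = b
  · subst hab
    rw [if_pos rfl, if_pos (by have := a.isLt; omega), ← pow_add]
    have h2 : (a : ℕ) + (a : ℕ) = 2 * (a : ℕ) := by omega
    rw [h2, pow_mul, neg_one_sq, one_pow]
  · rw [if_neg hab, if_neg, mul_zero]
    have := a.isLt; have := b.isLt
    intro hc
    exact hab (Fin.ext (by omega))

lemma RS_sum_rev_trunc {M : Type*} [AddCommMonoid M] {r m : ℕ} (hm : m ≤ r) (g : Fin r → M)
    (hz : ∀ k : Fin r, (k : ℕ) < r - m → g k = 0) :
    ∑ k, g k = ∑ c : Fin m, g ⟨r - 1 - (c : ℕ), by have := c.isLt; omega⟩ := by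
  classical
  set e : Fin m → Fin r := fun c => ⟨r - 1 - (c : ℕ), by have := c.isLt; omega⟩ with he
  have hinj : ∀ c ∈ Finset.univ, ∀ c' ∈ Finset.univ, e c = e c' → c = c' := by
    intro c _ c' _ h
    have := c.isLt; have := c'.isLt
    have hv : (e c : ℕ) = (e c' : ℕ) := by rw [h]
    simp only [he] at hv
    exact Fin.ext (by omega)
  have himg : Finset.univ.image e = Finset.univ.filter (fun k : Fin r => r - m ≤ (k : ℕ)) := by
    ext k
    simp only [Finset.mem_image, Finset.mem_univ, true_and, Finset.mem_filter]
    constructor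
    · rintro ⟨c, rfl⟩
      have := c.isLt
      simp only [he]
      omega
    · intro hk
      have := k.isLt
      refine ⟨⟨r - 1 - (k : ℕ), by omega⟩, ?_⟩
      simp only [he]
      exact Fin.ext (by simp only []; omega)
  rw [← Finset.sum_image hinj, himg]
  rw [Finset.sum_filter_of_ne]
  intro k _ hk
  by_contra hlt
  exact hk (hz k (by omega))

lemma RS_cramer_null {n : ℕ} (A : Matrix (Fin n) (Fin (n + 1)) F) (μ : F) :
    A.mulVec (fun c => μ * ((-1) ^ (c : ℕ) * (A.submatrix id c.succAbove).det)) = 0 := by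
  funext a
  set C : Matrix (Fin (n + 1)) (Fin (n + 1)) F := Matrix.of (Fin.cases (A a) A) with hCdef
  have hC : C.det = 0 := by
    apply Matrix.det_zero_of_row_eq (i := (0 : Fin (n + 1))) (j := a.succ)
      (Fin.succ_ne_zero a).symm
    funext q; simp [hCdef]; rfl
  have hdet := Matrix.det_succ_row_zero C
  rw [hC] at hdet
  have hsub : ∀ q : Fin (n + 1), C.submatrix Fin.succ q.succAbove = A.submatrix id q.succAbove := by
    intro q; ext x y; simp [hCdef]; rfl
  have hC0 : ∀ j, C 0 j = A a j := fun j => rfl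
  simp only [hsub, hC0] at hdet
  simp only [Matrix.mulVec, dotProduct, Pi.zero_apply]
  calc ∑ c : Fin (n + 1), A a c * (μ * ((-1) ^ (c : ℕ) * (A.submatrix id c.succAbove).det))
      = μ * ∑ c : Fin (n + 1), (-1) ^ (c : ℕ) * A a c * (A.submatrix id c.succAbove).det := by
        rw [Finset.mul_sum]; apply Finset.sum_congr rfl; intro c _; ring
    _ = 0 := by rw [← hdet]; ring

lemma RS_null_unique {n : ℕ} (A : Matrix (Fin n) (Fin (n + 1)) F) (v w : Fin (n + 1) → F)
    (hv : A.mulVec v = 0) (hw : A.mulVec w = 0)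
    (hlast : v (Fin.last n) = w (Fin.last n))
    (hB : (A.submatrix id Fin.castSucc).det ≠ 0) : v = w := by
  set B : Matrix (Fin n) (Fin n) F := A.submatrix id Fin.castSucc with hBdef
  set x : Fin n → F := fun c => v c.castSucc - w c.castSucc with hxdef
  have hBx : B.mulVec x = 0 := by
    funext a
    have h1 : (A.mulVec v) a - (A.mulVec w) a = 0 := by rw [hv, hw]; simp
    simp only [Matrix.mulVec, dotProduct] at h1 ⊢
    rw [← Finset.sum_sub_distrib, Fin.sum_univ_castSucc] at h1
    have h2 : A a (Fin.last n) * v (Fin.last n) - A a (Fin.last n) * w (Fin.last n) = 0 := by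
      rw [hlast]; ring
    rw [h2, add_zero] at h1
    simp only [Pi.zero_apply]
    rw [← h1]
    apply Finset.sum_congr rfl
    intro c _
    simp only [hBdef, hxdef, Matrix.submatrix_apply, id]
    ring
  have hx0 : x = 0 := by
    have h3 : B⁻¹.mulVec (B.mulVec x) = B⁻¹.mulVec 0 := by rw [hBx]
    rwa [Matrix.mulVec_mulVec, Matrix.nonsing_inv_mul _ (isUnit_iff_ne_zero.mpr hB),
      Matrix.one_mulVec, Matrix.mulVec_zero] at h3
  funext c
  refine Fin.lastCases hlast (fun c => ?_) c
  have := congrFun hx0 c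
  simpa [hxdef, sub_eq_zero] using this


/-- Explicit second unipotent factor of the Bruhat decomposition. -/
theorem bruhat_second_unipotent (r : ℕ) (hr : 1 ≤ r) (Y : Matrix (Fin r) (Fin r) F)
    (hY : ∀ (i : ℕ) (h1 : 1 ≤ i) (h2 : i ≤ r), (llCorner F r Y i h2).det ≠ 0)
    (u1 u2 : Matrix (Fin r) (Fin r) F) (d : Fin r → F)
    (hu1 : UTU F u1) (hu2 : UTU F u2) (hd : ∀ i, d i ≠ 0)
    (hdec : theta F r Y = u1 * Jmat F r * Matrix.diagonal d * u2) :
    ∀ (i j : ℕ) (h1 : 1 ≤ i) (hij : i < j) (hj : j ≤ r),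
      u2 ⟨i - 1, by omega⟩ ⟨j - 1, by omega⟩ =
        (subDelCol F r Y i j h1 hij hj).det /
          (llCorner F r Y (r - i) (by omega)).det := by
  intro i j h1 hij hj
  have hJJT : Jmat F r * (Jmat F r)ᵀ = 1 := RS_J_mul_Jt F r
  have hJinv : (Jmat F r)⁻¹ = (Jmat F r)ᵀ := Matrix.inv_eq_right_inv hJJT
  have hJtJ : (Jmat F r)ᵀ * Jmat F r = 1 := mul_eq_one_comm.mp hJJT
  have hYdet : Y.det ≠ 0 := by
    have h := hY r hr le_rfl
    have e : llCorner F r Y r le_rfl = Y := by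
      ext a b
      simp only [llCorner, Matrix.of_apply]
      congr 1 <;> exact Fin.ext (by simp)
    rwa [e] at h
  have htri1 : u1.BlockTriangular id := fun p q h => hu1.2 p q h
  have hu1det : u1.det = 1 := by
    rw [Matrix.det_of_upperTriangular htri1]
    exact Finset.prod_eq_one fun p _ => hu1.1 p
  have hinvu1 : Invertible u1 := u1.invertibleOfIsUnitDet (by rw [hu1det]; exact isUnit_one)
  have htriinv : u1⁻¹.BlockTriangular id :=
    Matrix.blockTriangular_inv_of_blockTriangular htri1
  have hu1c : u1⁻¹ * u1 = 1 := Matrix.nonsing_inv_mul _ (by rw [hu1det]; exact isUnit_one)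
  have hYt : (Y⁻¹)ᵀ * Yᵀ = 1 := by
    rw [← Matrix.transpose_mul, Matrix.mul_nonsing_inv Y (isUnit_iff_ne_zero.mpr hYdet),
      Matrix.transpose_one]
  rw [theta, hJinv] at hdec
  have cJtJ : ∀ M : Matrix (Fin r) (Fin r) F, (Jmat F r)ᵀ * (Jmat F r * M) = M := fun M => by
    rw [← Matrix.mul_assoc, hJtJ, Matrix.one_mul]
  have cu1 : ∀ M : Matrix (Fin r) (Fin r) F, u1⁻¹ * (u1 * M) = M := fun M => by
    rw [← Matrix.mul_assoc, hu1c, Matrix.one_mul]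
  have key : Matrix.diagonal d * (u2 * (Jmat F r * Yᵀ)) = (Jmat F r)ᵀ * (u1⁻¹ * Jmat F r) := by
    have e2 := congrArg (fun M => (Jmat F r)ᵀ * (u1⁻¹ * (M * (Jmat F r * Yᵀ)))) hdec
    simp only [Matrix.mul_assoc] at e2
    rw [cJtJ Yᵀ, hYt, Matrix.mul_one, cu1, cJtJ] at e2
    exact e2.symm
  have hzero : ∀ a b : Fin r, (a : ℕ) < (b : ℕ) → (u2 * (Jmat F r * Yᵀ)) a b = 0 := by
    intro a b hab
    have h2 : ((Jmat F r)ᵀ * (u1⁻¹ * Jmat F r)) a b = 0 := by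
      rw [RS_Jt_mul_apply, RS_mul_J_apply]
      have h4 : u1⁻¹ ⟨r - 1 - (a : ℕ), by have := a.isLt; omega⟩
          ⟨r - 1 - (b : ℕ), by have := b.isLt; omega⟩ = 0 := by
        apply htriinv
        show (⟨r - 1 - (b : ℕ), by have := b.isLt; omega⟩ : Fin r)
          < ⟨r - 1 - (a : ℕ), by have := a.isLt; omega⟩
        rw [Fin.lt_def]
        have := b.isLt
        simp only []
        omega
      rw [h4]
      ring
    have h5 := congrFun (congrFun key a) b
    rw [Matrix.diagonal_mul, h2] at h5
    exact (mul_eq_zero.mp h5).resolve_left (hd a)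
  have hrow : ∀ a : Fin (r - i),
      ∑ k : Fin r, u2 ⟨i - 1, by omega⟩ k *
        ((-1 : F) ^ (k : ℕ) * Y ⟨i + (a : ℕ), by have := a.isLt; omega⟩
          ⟨r - 1 - (k : ℕ), by have := k.isLt; omega⟩) = 0 := by
    intro a
    have h6 := hzero ⟨i - 1, by omega⟩ ⟨i + (a : ℕ), by have := a.isLt; omega⟩ (by simp; omega)
    rw [Matrix.mul_apply] at h6
    rw [← h6]
    apply Finset.sum_congr rfl
    intro k _
    rw [RS_J_mul_apply, Matrix.transpose_apply]
  have hn1 : r - i + 1 ≤ r := by omega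
  set A : Matrix (Fin (r - i)) (Fin (r - i + 1)) F :=
    Matrix.of (fun a c => Y ⟨i + (a : ℕ), by have := a.isLt; omega⟩
      ⟨(c : ℕ), by have := c.isLt; omega⟩) with hAdef
  set v : Fin (r - i + 1) → F := fun c =>
    (-1 : F) ^ (r - 1 - (c : ℕ)) * u2 ⟨i - 1, by omega⟩ ⟨r - 1 - (c : ℕ), by omega⟩ with hvdef
  set llc := (llCorner F r Y (r - i) (by omega)).det with hllcdef
  have hllc : llc ≠ 0 := hY (r - i) (by omega) (by omega)
  set μ : F := (-1 : F) ^ (i - 1 + (r - i)) / llc with hmudef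
  have hsubB : A.submatrix id Fin.castSucc = llCorner F r Y (r - i) (by omega) := by
    ext a b
    simp only [Matrix.submatrix_apply, id, hAdef, llCorner, Matrix.of_apply, Fin.coe_castSucc]
    congr 1 <;> exact Fin.ext (by simp only []; omega)
  have hB : (A.submatrix id Fin.castSucc).det ≠ 0 := by rw [hsubB, ← hllcdef]; exact hllc
  have hAv : A.mulVec v = 0 := by
    funext a
    have h7 := hrow a
    have hz : ∀ k : Fin r, (k : ℕ) < r - (r - i + 1) →
        u2 ⟨i - 1, by omega⟩ k *
          ((-1 : F) ^ (k : ℕ) * Y ⟨i + (a : ℕ), by have := a.isLt; omega⟩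
            ⟨r - 1 - (k : ℕ), by have := k.isLt; omega⟩) = 0 := by
      intro k hk
      rw [hu2.2 ⟨i - 1, by omega⟩ k (show (k : ℕ) < i - 1 by omega), zero_mul]
    rw [RS_sum_rev_trunc hn1 _ hz] at h7
    simp only [Matrix.mulVec, dotProduct, Pi.zero_apply]
    rw [← h7]
    apply Finset.sum_congr rfl
    intro c _
    have hc := c.isLt
    have hidx : (⟨r - 1 - (r - 1 - (c : ℕ)), by omega⟩ : Fin r) = ⟨(c : ℕ), by omega⟩ :=
      Fin.ext (by simp only []; omega)
    simp only [hAdef, hvdef, Matrix.of_apply]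
    rw [hidx]
    ring
  have hAw := RS_cramer_null F A μ
  have hlast : v (Fin.last (r - i)) =
      μ * ((-1 : F) ^ ((Fin.last (r - i) : Fin (r - i + 1)) : ℕ)
        * (A.submatrix id (Fin.last (r - i)).succAbove).det) := by
    have hsl : A.submatrix id (Fin.last (r - i)).succAbove = llCorner F r Y (r - i) (by omega) := by
      rw [Fin.succAbove_last, hsubB]
    rw [hsl, ← hllcdef]
    have hi1 : r - 1 - (r - i) = i - 1 := by omega
    simp only [hvdef, Fin.val_last, hi1]
    rw [hu2.1 ⟨i - 1, by omega⟩, mul_one, hmudef]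
    rw [div_mul_eq_mul_div, eq_div_iff hllc]
    have hp : ((-1 : F) ^ (i - 1 + (r - i)) * (-1 : F) ^ (r - i)) = (-1 : F) ^ (i - 1) := by
      rw [← pow_add]
      have he : i - 1 + (r - i) + (r - i) = i - 1 + 2 * (r - i) := by omega
      rw [he, pow_add, pow_mul, neg_one_sq, one_pow, mul_one]
    calc (-1 : F) ^ (i - 1) * llc
        = llc * ((-1 : F) ^ (i - 1)) := by ring
      _ = llc * ((-1 : F) ^ (i - 1 + (r - i)) * (-1 : F) ^ (r - i)) := by rw [hp]
      _ = (-1 : F) ^ (i - 1 + (r - i)) * ((-1 : F) ^ (r - i) * llc) := by ring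
  have hvw := RS_null_unique F A v _ hAv hAw hlast hB
  have hc0 := congrFun hvw ⟨r - j, by omega⟩
  have hsubC : A.submatrix id (⟨r - j, by omega⟩ : Fin (r - i + 1)).succAbove
      = subDelCol F r Y i j h1 hij hj := by
    ext a b
    simp only [Matrix.submatrix_apply, id, hAdef, Matrix.of_apply, subDelCol]
    by_cases hb : (b : ℕ) < r - j
    · rw [dif_pos hb]
      congr 1
      exact Fin.ext (by simp [Fin.succAbove, Fin.lt_def, hb])
    · rw [dif_neg hb]
      congr 1
      exact Fin.ext (by simp [Fin.succAbove, Fin.lt_def, hb])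
  rw [hsubC] at hc0
  have hj1 : r - 1 - (r - j) = j - 1 := by omega
  simp only [hvdef, hj1] at hc0
  -- hc0 : (-1)^(j-1) * u2 ⟨i-1⟩ ⟨j-1⟩ = μ * ((-1)^(r-j) * det subDelCol)
  have hpow : (-1 : F) ^ (j - 1) * (-1 : F) ^ (j - 1) = 1 := by
    rw [← pow_add]
    have he : j - 1 + (j - 1) = 2 * (j - 1) := by omega
    rw [he, pow_mul, neg_one_sq, one_pow]
  calc u2 ⟨i - 1, by omega⟩ ⟨j - 1, by omega⟩
      = ((-1 : F) ^ (j - 1) * (-1 : F) ^ (j - 1)) * u2 ⟨i - 1, by omega⟩ ⟨j - 1, by omega⟩ := by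
        rw [hpow, one_mul]
    _ = (-1 : F) ^ (j - 1) *
        ((-1 : F) ^ (j - 1) * u2 ⟨i - 1, by omega⟩ ⟨j - 1, by omega⟩) := by ring
    _ = (-1 : F) ^ (j - 1) *
        (μ * ((-1 : F) ^ (r - j) * (subDelCol F r Y i j h1 hij hj).det)) := by rw [hc0]
    _ = (subDelCol F r Y i j h1 hij hj).det / llc := by
        rw [hmudef, div_mul_eq_mul_div, mul_div_assoc']
        congr 1
        rw [← mul_assoc, ← mul_assoc, ← pow_add, ← pow_add]
        have he : j - 1 + (i - 1 + (r - i)) + (r - j) = 2 * (r - 1) := by omega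
        rw [he, pow_mul, neg_one_sq, one_pow, one_mul]


end RS
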